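/- For matrices X ∈ M_n(ℂ) and contractions K ∈ M_n(ℂ) (K*K ≤ I), for every k ≤ n the product of the k largest singular values of X K X* is at most the product of the k largest eigenvalues of X X* (Horn-type log-majorization). -/

import Mathlib

open Matrix ComplexOrder

/-- The square root of a positive semidefinite matrix, as `Matrix.PosSemidef.sqrt` was defined
in the older Mathlib (since removed). -/
noncomputable def psdSqrtOld {n : ℕ} {A : Matrix (Fin n) (Fin n) ℂ} (hA : A.PosSemidef) :
    Matrix (Fin n) (Fin n) ℂ :=
  hA.1.eigenvectorUnitary.1 * diagonal ((↑) ∘ (√·) ∘ hA.1.eigenvalues) *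
    (star hA.1.eigenvectorUnitary : Matrix (Fin n) (Fin n) ℂ)

theorem psdSqrtOld_posSemidef {n : ℕ} {A : Matrix (Fin n) (Fin n) ℂ} (hA : A.PosSemidef) :
    (psdSqrtOld hA).PosSemidef := by
  unfold psdSqrtOld
  apply PosSemidef.mul_mul_conjTranspose_same
  refine posSemidef_diagonal_iff.mpr fun i ↦ ?_
  rw [Function.comp_apply, Function.comp_apply]
  exact Complex.zero_le_real.mpr (Real.sqrt_nonneg _)

/-- The absolute value `|M| = (Mᴴ M)^{1/2}` of a complex matrix. -/
noncomputable def matAbs {n : ℕ} (M : Matrix (Fin n) (Fin n) ℂ) : Matrix (Fin n) (Fin n) ℂ :=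
  psdSqrtOld (Matrix.posSemidef_conjTranspose_mul_self M)

theorem matAbs_posSemidef {n : ℕ} (M : Matrix (Fin n) (Fin n) ℂ) : (matAbs M).PosSemidef :=
  psdSqrtOld_posSemidef (Matrix.posSemidef_conjTranspose_mul_self M)

/-- Eigenvalues of a Hermitian matrix arranged in decreasing order:
`eigDesc hM j` is the `j`-th largest eigenvalue. -/
noncomputable def eigDesc {n : ℕ} {M : Matrix (Fin n) (Fin n) ℂ} (hM : M.IsHermitian) :
    Fin n → ℝ :=
  fun i => hM.eigenvalues (Tuple.sort hM.eigenvalues i.rev)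

/-- Eigenvalues of a Hermitian matrix arranged in increasing order. -/
noncomputable def eigAsc {n : ℕ} {M : Matrix (Fin n) (Fin n) ℂ} (hM : M.IsHermitian) :
    Fin n → ℝ :=
  fun i => hM.eigenvalues (Tuple.sort hM.eigenvalues i)

/-- The largest eigenvalue of a Hermitian matrix. -/
noncomputable def maxEig {n : ℕ} {M : Matrix (Fin n) (Fin n) ℂ} (hM : M.IsHermitian) : ℝ :=
  ⨆ i, hM.eigenvalues i

/-- Real power `M^t` of a Hermitian matrix, via the spectral decomposition. -/
noncomputable def rpowH {n : ℕ} {M : Matrix (Fin n) (Fin n) ℂ} (hM : M.IsHermitian) (t : ℝ) :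
    Matrix (Fin n) (Fin n) ℂ :=
  (hM.eigenvectorUnitary : Matrix (Fin n) (Fin n) ℂ) *
    Matrix.diagonal (fun i => ((hM.eigenvalues i ^ t : ℝ) : ℂ)) *
    star (hM.eigenvectorUnitary : Matrix (Fin n) (Fin n) ℂ)

theorem rpowH_isHermitian {n : ℕ} {M : Matrix (Fin n) (Fin n) ℂ} (hM : M.IsHermitian) (t : ℝ) :
    (rpowH hM t).IsHermitian := by
  unfold rpowH
  unfold Matrix.IsHermitian
  simp [Matrix.conjTranspose_mul, Matrix.diagonal_conjTranspose, mul_assoc,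
    Matrix.star_eq_conjTranspose]
  congr 2
  funext i
  simp [star]
  rfl

/-- The ℓ²→ℓ² operator norm of a complex matrix. -/
noncomputable def opN {n : ℕ} (M : Matrix (Fin n) (Fin n) ℂ) : ℝ :=
  ‖Matrix.toEuclideanCLM (𝕜 := ℂ) M‖

theorem psdSqrtOld_mul_self {n : ℕ} {A : Matrix (Fin n) (Fin n) ℂ} (hA : A.PosSemidef) :
    psdSqrtOld hA * psdSqrtOld hA = A := by
  have hU : (star hA.1.eigenvectorUnitary : Matrix (Fin n) (Fin n) ℂ) *
      hA.1.eigenvectorUnitary.1 = 1 :=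
    Matrix.mem_unitaryGroup_iff'.mp hA.1.eigenvectorUnitary.2
  have hs : A = hA.1.eigenvectorUnitary.1 * diagonal (fun i => ((hA.1.eigenvalues i : ℝ) : ℂ)) *
      (star hA.1.eigenvectorUnitary : Matrix (Fin n) (Fin n) ℂ) := hA.1.spectral_theorem
  unfold psdSqrtOld
  conv_rhs => rw [hs]
  simp only [Matrix.mul_assoc]
  rw [← Matrix.mul_assoc (star _) _ _, hU, Matrix.one_mul, ← Matrix.mul_assoc (diagonal _),
    diagonal_mul_diagonal]
  congr 2
  congr 1
  funext i
  simp only [Function.comp_apply]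
  rw [← Complex.ofReal_mul, Real.mul_self_sqrt (hA.eigenvalues_nonneg i)]

namespace HornAux
open Finset Equiv


variable {R : Type*} [CommRing R]

local notation "ε " σ:max => ((Equiv.Perm.sign σ : ℤ) : R)

theorem my_det_mul_expand {k n : ℕ} (A : Matrix (Fin k) (Fin n) R) (B : Matrix (Fin n) (Fin k) R) :
    det (A * B) = ∑ p : Fin k → Fin n, ∑ σ : Equiv.Perm (Fin k),
      ε σ * ∏ i, A (σ i) (p i) * B (p i) i := by
  simp only [det_apply', mul_apply, prod_univ_sum, mul_sum, Fintype.piFinset_univ]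
  rw [Finset.sum_comm]

theorem my_det_mul_aux {k n : ℕ} {A : Matrix (Fin k) (Fin n) R} {B : Matrix (Fin n) (Fin k) R}
    {p : Fin k → Fin n} (H : ¬Function.Injective p) :
    (∑ σ : Equiv.Perm (Fin k), ε σ * ∏ x, A (σ x) (p x) * B (p x) x) = 0 := by
  obtain ⟨i, j, hpij, hij⟩ : ∃ i j, p i = p j ∧ i ≠ j := by
    rw [Function.Injective] at H
    push_neg at H
    exact H
  exact sum_involution (fun σ _ => σ * Equiv.swap i j)
    (fun σ _ => by
      have : (∏ x, A (σ x) (p x)) = ∏ x, A ((σ * Equiv.swap i j) x) (p x) :=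
        Fintype.prod_equiv (Equiv.swap i j) _ _ (by simp [Equiv.apply_swap_eq_self hpij])
      simp [this, Equiv.Perm.sign_swap hij, -Equiv.Perm.sign_swap', prod_mul_distrib])
    (fun σ _ _ => (not_congr Equiv.mul_swap_eq_iff).mpr hij) (fun _ _ => mem_univ _)
    fun σ _ => Equiv.mul_swap_involutive i j σ

theorem my_det_mul_filter {k n : ℕ} (A : Matrix (Fin k) (Fin n) R) (B : Matrix (Fin n) (Fin k) R) :
    det (A * B) = ∑ p ∈ univ.filter (fun p : Fin k → Fin n => Function.Injective p),
      ∑ σ : Equiv.Perm (Fin k), ε σ * ∏ i, A (σ i) (p i) * B (p i) i := by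
  rw [my_det_mul_expand]
  refine (sum_subset (filter_subset _ _) fun f _ hinj => my_det_mul_aux ?_).symm
  simpa only [true_and, mem_filter, mem_univ] using hinj

theorem my_det_mul_perm {k : ℕ} (M N : Matrix (Fin k) (Fin k) R) :
    det (M * N) = ∑ τ : Equiv.Perm (Fin k),
      ∑ σ : Equiv.Perm (Fin k), ε σ * ∏ i, M (σ i) (τ i) * N (τ i) i := by
  rw [my_det_mul_filter]
  refine sum_bij (fun p h => Equiv.ofBijective p
    (Finite.injective_iff_bijective.mp (mem_filter.1 h).2)) (fun _ _ => mem_univ _)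
    (fun _ _ _ _ h => by injection h)
    (fun b _ => ⟨b, mem_filter.2 ⟨mem_univ _, b.injective⟩, Equiv.coe_fn_injective rfl⟩)
    fun _ _ => rfl

/-- **Cauchy–Binet formula**. -/
theorem my_cauchyBinet {k n : ℕ} (A : Matrix (Fin k) (Fin n) R) (B : Matrix (Fin n) (Fin k) R) :
    det (A * B) = ∑ f ∈ univ.filter (fun f : Fin k → Fin n => StrictMono f),
      det (A.submatrix id f) * det (B.submatrix f id) := by
  rw [my_det_mul_filter]
  have key : ∀ f ∈ univ.filter (fun f : Fin k → Fin n => StrictMono f),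
      det (A.submatrix id f) * det (B.submatrix f id) =
        ∑ τ : Equiv.Perm (Fin k), ∑ σ : Equiv.Perm (Fin k),
          ε σ * ∏ i, A (σ i) (f (τ i)) * B (f (τ i)) i := by
    intro f _
    rw [← det_mul, my_det_mul_perm]
    rfl
  rw [Finset.sum_congr rfl key]
  rw [← Finset.sum_product' (s := univ.filter (fun f : Fin k → Fin n => StrictMono f))
    (t := (univ : Finset (Equiv.Perm (Fin k))))]
  refine (Finset.sum_bij
    (fun (x : (Fin k → Fin n) × Equiv.Perm (Fin k)) _ => x.1 ∘ ⇑x.2) ?_ ?_ ?_ ?_).symm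
  · rintro ⟨f, τ⟩ hx
    simp only [Finset.mem_product, mem_filter, mem_univ, true_and, and_true] at hx ⊢
    exact hx.injective.comp τ.injective
  · rintro ⟨f, τ⟩ hx ⟨g, π⟩ hy h
    dsimp only at h
    simp only [Finset.mem_product, mem_filter, mem_univ, true_and, and_true] at hx hy
    have himg : univ.image f = univ.image g := by
      have h1 : univ.image (f ∘ ⇑τ) = univ.image f := by
        rw [← Finset.image_image (g := f) (f := ⇑τ)]
        congr 1
        exact Finset.image_univ_equiv τ
      have h2 : univ.image (g ∘ ⇑π) = univ.image g := by
        rw [← Finset.image_image (g := g) (f := ⇑π)]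
        congr 1
        exact Finset.image_univ_equiv π
      rw [← h1, ← h2, h]
    have hcard : (univ.image f).card = k := by
      rw [Finset.card_image_of_injective _ hx.injective, card_univ, Fintype.card_fin]
    have hf : f = (univ.image f).orderEmbOfFin hcard :=
      Finset.orderEmbOfFin_unique hcard (fun x => Finset.mem_image_of_mem f (mem_univ x)) hx
    have hg : g = (univ.image f).orderEmbOfFin hcard := by
      refine Finset.orderEmbOfFin_unique hcard ?_ hy
      intro x
      rw [himg]
      exact Finset.mem_image_of_mem g (mem_univ x)
    have hfg : f = g := hf.trans hg.symm
    subst hfg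
    have hτ : τ = π := by
      ext x
      exact congrArg Fin.val (hx.injective (congrFun h x))
    rw [hτ]
  · intro p hp
    simp only [mem_filter, mem_univ, true_and] at hp
    refine ⟨⟨p ∘ ⇑(Tuple.sort p), (Tuple.sort p)⁻¹⟩, ?_, ?_⟩
    · simp only [Finset.mem_product, mem_filter, mem_univ, true_and, and_true]
      exact (Tuple.monotone_sort p).strictMono_of_injective
        (hp.comp (Tuple.sort p).injective)
    · funext x
      simp
  · rintro ⟨f, τ⟩ hx
    rfl



lemma eig_le_one {m : ℕ} {T : Matrix (Fin m) (Fin m) ℂ} (hT : T.PosSemidef)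
    (h1 : ((1 : Matrix (Fin m) (Fin m) ℂ) - T).PosSemidef) (i : Fin m) :
    hT.1.eigenvalues i ≤ 1 := by
  have h := h1.re_dotProduct_nonneg ⇑(hT.1.eigenvectorBasis i)
  rw [sub_mulVec, dotProduct_sub, map_sub, one_mulVec] at h
  have hself : RCLike.re (dotProduct (star ⇑(hT.1.eigenvectorBasis i))
      ⇑(hT.1.eigenvectorBasis i)) = 1 := by
    rw [dotProduct_comm, ← EuclideanSpace.inner_eq_star_dotProduct, inner_self_eq_norm_sq_to_K]
    simp [hT.1.eigenvectorBasis.orthonormal.1 i]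
  rw [hself, ← hT.1.eigenvalues_eq i] at h
  linarith

lemma det_re_eq {m : ℕ} {T : Matrix (Fin m) (Fin m) ℂ} (hT : T.PosSemidef) :
    Matrix.det T = (((Matrix.det T).re : ℝ) : ℂ) ∧ 0 ≤ (Matrix.det T).re := by
  have h := hT.1.det_eq_prod_eigenvalues
  have h2 : Matrix.det T = ((∏ i, hT.1.eigenvalues i : ℝ) : ℂ) := by
    rw [h]; push_cast; rfl
  rw [h2]
  simp only [Complex.ofReal_re]
  exact ⟨trivial, Finset.prod_nonneg fun i _ => hT.eigenvalues_nonneg i⟩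

lemma det_le_one {m : ℕ} {T : Matrix (Fin m) (Fin m) ℂ} (hT : T.PosSemidef)
    (h1 : ((1 : Matrix (Fin m) (Fin m) ℂ) - T).PosSemidef) : (Matrix.det T).re ≤ 1 := by
  have h2 : Matrix.det T = ((∏ i, hT.1.eigenvalues i : ℝ) : ℂ) := by
    rw [hT.1.det_eq_prod_eigenvalues]; push_cast; rfl
  rw [h2, Complex.ofReal_re]
  exact Finset.prod_le_one (fun i _ => hT.eigenvalues_nonneg i) fun i _ => eig_le_one hT h1 i

lemma det_mono {m : ℕ} {P Q : Matrix (Fin m) (Fin m) ℂ} (hP : P.PosSemidef)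
    (hQ : Q.PosSemidef) (hPQ : (Q - P).PosSemidef) : (Matrix.det P).re ≤ (Matrix.det Q).re := by
  by_cases hdet : Matrix.det Q = 0
  · obtain ⟨x, hx0, hQx⟩ := (Matrix.exists_mulVec_eq_zero_iff).mpr hdet
    have h1 : star x ⬝ᵥ P *ᵥ x = 0 := by
      have h2 := hPQ.dotProduct_mulVec_nonneg x
      rw [sub_mulVec, dotProduct_sub, hQx, dotProduct_zero] at h2
      have h3 := hP.dotProduct_mulVec_nonneg x
      have h4 : star x ⬝ᵥ P *ᵥ x ≤ 0 := by simpa using sub_nonneg.mp h2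
      exact le_antisymm h4 h3
    have hPx : P *ᵥ x = 0 := (hP.dotProduct_mulVec_zero_iff x).mp h1
    have hPdet : Matrix.det P = 0 := Matrix.exists_mulVec_eq_zero_iff.mp ⟨x, hx0, hPx⟩
    rw [hPdet, hdet]
  · -- Q is invertible
    obtain ⟨T, hTpsd, hTT⟩ : ∃ T : Matrix (Fin m) (Fin m) ℂ, T.PosSemidef ∧ T * T = Q :=
      ⟨psdSqrtOld hQ, psdSqrtOld_posSemidef hQ, psdSqrtOld_mul_self hQ⟩
    have hdT : Matrix.det T ≠ 0 := fun h => hdet (by rw [← hTT, det_mul, h, zero_mul])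
    have hTunit : IsUnit T.det := hdT.isUnit
    have hTinv : T⁻¹ * T = 1 := Matrix.nonsing_inv_mul T hTunit
    have hTinv' : T * T⁻¹ = 1 := Matrix.mul_nonsing_inv T hTunit
    have hTinvH : (T⁻¹)ᴴ = T⁻¹ := hTpsd.1.inv
    set P' := T⁻¹ * P * T⁻¹ with hP'def
    have hP'psd : P'.PosSemidef := by
      have := hP.mul_mul_conjTranspose_same T⁻¹
      rwa [hTinvH] at this
    have hone : (1 : Matrix (Fin m) (Fin m) ℂ) - P' = T⁻¹ * (Q - P) * T⁻¹ := by
      rw [Matrix.mul_sub, Matrix.sub_mul, hP'def]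
      congr 1
      rw [← hTT, ← Matrix.mul_assoc, hTinv, Matrix.one_mul, hTinv']
    have h1P' : ((1 : Matrix (Fin m) (Fin m) ℂ) - P').PosSemidef := by
      rw [hone]
      have h := hPQ.mul_mul_conjTranspose_same T⁻¹
      rwa [hTinvH] at h
    have hP'le : (Matrix.det P').re ≤ 1 := det_le_one hP'psd h1P'
    have hPfact : P = T * P' * T := by
      rw [hP'def, ← Matrix.mul_assoc, ← Matrix.mul_assoc, hTinv', Matrix.one_mul,
        Matrix.mul_assoc, hTinv, Matrix.mul_one]
    have hdetP : Matrix.det P = Matrix.det T * Matrix.det P' * Matrix.det T := by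
      rw [hPfact, det_mul, det_mul]
    have hdetQ : Matrix.det Q = Matrix.det T * Matrix.det T := by rw [← hTT, det_mul]
    obtain ⟨hTreal, hTnn⟩ := det_re_eq hTpsd
    obtain ⟨hP'real, hP'nn⟩ := det_re_eq hP'psd
    set t := (Matrix.det T).re
    set p' := (Matrix.det P').re
    have h1 : (Matrix.det P).re = t * p' * t := by
      rw [hdetP, hTreal, hP'real, ← Complex.ofReal_mul, ← Complex.ofReal_mul,
        Complex.ofReal_re]
    have h2 : (Matrix.det Q).re = t * t := by
      rw [hdetQ, hTreal, ← Complex.ofReal_mul, Complex.ofReal_re]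
    rw [h1, h2]
    nlinarith


lemma det_conjTranspose_mul {n k : ℕ} (A B : Matrix (Fin n) (Fin k) ℂ) :
    det (Aᴴ * B) = ∑ f ∈ univ.filter (fun f : Fin k → Fin n => StrictMono f),
      (starRingEnd ℂ) (det (A.submatrix f id)) * det (B.submatrix f id) := by
  rw [my_cauchyBinet]
  refine Finset.sum_congr rfl fun f _ => ?_
  congr 1
  have h : Aᴴ.submatrix id f = (A.submatrix f id)ᴴ := by
    ext i j
    simp [conjTranspose_apply]
  rw [h, det_conjTranspose]
  rfl

lemma det_gram_re {n k : ℕ} (A : Matrix (Fin n) (Fin k) ℂ) :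
    (det (Aᴴ * A)).re = ∑ f ∈ univ.filter (fun f : Fin k → Fin n => StrictMono f),
      ‖det (A.submatrix f id)‖ ^ 2 := by
  rw [det_conjTranspose_mul A A]
  rw [Complex.re_sum]
  refine Finset.sum_congr rfl fun f _ => ?_
  rw [mul_comm, Complex.mul_conj]
  simp [Complex.sq_norm]

lemma det_CS {n k : ℕ} (A B : Matrix (Fin n) (Fin k) ℂ) :
    ‖det (Aᴴ * B)‖ ^ 2 ≤ (det (Aᴴ * A)).re * (det (Bᴴ * B)).re := by
  rw [det_gram_re A, det_gram_re B, det_conjTranspose_mul]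
  set s := univ.filter (fun f : Fin k → Fin n => StrictMono f)
  calc ‖∑ f ∈ s, (starRingEnd ℂ) (det (A.submatrix f id)) * det (B.submatrix f id)‖ ^ 2
      ≤ (∑ f ∈ s, ‖det (A.submatrix f id)‖ * ‖det (B.submatrix f id)‖) ^ 2 := by
        refine pow_le_pow_left₀ (norm_nonneg _) ?_ 2
        refine le_trans (norm_sum_le _ _) (le_of_eq ?_)
        refine Finset.sum_congr rfl fun f _ => ?_
        rw [norm_mul]
        simp
    _ ≤ _ := Finset.sum_mul_sq_le_sq_mul_sq s _ _

lemma strictMono_le_apply {k n : ℕ} {e : Fin k → Fin n} (he : StrictMono e) (j : Fin k) :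
    (j : ℕ) ≤ (e j : ℕ) := by
  suffices h : ∀ m : ℕ, ∀ j : Fin k, (j : ℕ) = m → m ≤ (e j : ℕ) from h _ j rfl
  intro m
  induction m with
  | zero => intro j _; exact Nat.zero_le _
  | succ l ih =>
    intro j hj
    have hl : l < k := by omega
    have hlt : (⟨l, hl⟩ : Fin k) < j := by
      rw [Fin.lt_def, Fin.val_mk]; omega
    have h1 := he hlt
    have h2 := ih ⟨l, hl⟩ rfl
    rw [Fin.lt_def] at h1
    have hc : ((⟨l, hl⟩ : Fin k) : ℕ) = l := rfl
    omega

lemma prod_sel_le {n k : ℕ} (hk : k ≤ n) (lam : Fin n → ℝ) (hnn : ∀ i, 0 ≤ lam i)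
    (g : Fin k → Fin n) (hg : Function.Injective g) :
    ∏ j : Fin k, lam (g j) ≤
      ∏ j : Fin k, lam (Tuple.sort lam (Fin.castLE hk j).rev) := by
  set d : Fin n → ℝ := fun i => lam (Tuple.sort lam i.rev) with hd
  have hdnn : ∀ i, 0 ≤ d i := fun i => hnn _
  have hdanti : Antitone d := by
    intro i i' hii'
    exact Tuple.monotone_sort lam (by exact Fin.rev_le_rev.mpr hii')
  set g' : Fin k → Fin n := fun j => ((Tuple.sort lam)⁻¹ (g j)).rev with hg'
  have hg'inj : Function.Injective g' := by
    intro a b hab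
    apply hg
    have := Fin.rev_injective hab
    exact (Tuple.sort lam)⁻¹.injective this
  have heq : ∀ j, lam (g j) = d (g' j) := by
    intro j
    simp only [hd, hg', Fin.rev_rev, Equiv.apply_symm_apply, Equiv.Perm.inv_def]
  rw [Finset.prod_congr rfl fun j _ => heq j]
  -- sort g'
  set e : Fin k → Fin n := g' ∘ (Tuple.sort g') with he
  have hemono : StrictMono e :=
    (Tuple.monotone_sort g').strictMono_of_injective (hg'inj.comp (Tuple.sort g').injective)
  have hre : ∏ j : Fin k, d (g' j) = ∏ j : Fin k, d (e j) :=
    (Equiv.prod_comp (Tuple.sort g') fun j => d (g' j)).symm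
  rw [hre]
  refine Finset.prod_le_prod (fun j _ => hdnn _) fun j _ => ?_
  refine hdanti ?_
  rw [Fin.le_def]
  exact strictMono_le_apply hemono j

lemma kyFan {n k : ℕ} (hk : k ≤ n) {H : Matrix (Fin n) (Fin n) ℂ} (hH : H.PosSemidef)
    (U : Matrix (Fin n) (Fin k) ℂ) (hU : Uᴴ * U = 1) :
    (det (Uᴴ * H * U)).re ≤
      ∏ j : Fin k, hH.1.eigenvalues (Tuple.sort hH.1.eigenvalues (Fin.castLE hk j).rev) := by
  classical
  set lam := hH.1.eigenvalues with hlam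
  set E : Matrix (Fin n) (Fin n) ℂ := (hH.1.eigenvectorUnitary : Matrix (Fin n) (Fin n) ℂ)
    with hE
  have hEsm : Eᴴ * E = 1 := by
    rw [← star_eq_conjTranspose]
    exact Matrix.mem_unitaryGroup_iff'.mp hH.1.eigenvectorUnitary.2
  have hEms : E * Eᴴ = 1 := by
    rw [← star_eq_conjTranspose]
    exact Matrix.mem_unitaryGroup_iff.mp hH.1.eigenvectorUnitary.2
  set D : Matrix (Fin n) (Fin n) ℂ := diagonal (fun i => (lam i : ℂ)) with hD
  have hspec : H = E * D * Eᴴ := by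
    rw [← star_eq_conjTranspose]
    exact hH.1.spectral_theorem
  set Rt : Matrix (Fin n) (Fin n) ℂ := diagonal (fun i => (Real.sqrt (lam i) : ℂ)) with hR
  have hRR : Rt * Rt = D := by
    rw [hR, hD, diagonal_mul_diagonal]
    refine congrArg diagonal (funext fun i => ?_)
    rw [← Complex.ofReal_mul, Real.mul_self_sqrt (hH.eigenvalues_nonneg i)]
  have hRH : Rtᴴ = Rt := by
    rw [hR, diagonal_conjTranspose]
    refine congrArg diagonal (funext fun i => ?_)
    simp only [Pi.star_apply, Complex.star_def, Complex.conj_ofReal]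
  set G : Matrix (Fin n) (Fin k) ℂ := Eᴴ * U with hG
  set F : Matrix (Fin n) (Fin k) ℂ := Rt * G with hF
  have hmain : Uᴴ * H * U = Fᴴ * F := by
    rw [hF, conjTranspose_mul, hG, conjTranspose_mul, conjTranspose_conjTranspose, hRH, hspec]
    rw [← hRR]
    simp only [Matrix.mul_assoc]
  have hGG : Gᴴ * G = 1 := by
    rw [hG, conjTranspose_mul, conjTranspose_conjTranspose, Matrix.mul_assoc,
      ← Matrix.mul_assoc E, hEms, Matrix.one_mul, hU]
  rw [hmain, det_gram_re]
  have hsub : ∀ f : Fin k → Fin n,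
      det (F.submatrix f id) = (∏ j : Fin k, (Real.sqrt (lam (f j)) : ℂ)) * det (G.submatrix f id) := by
    intro f
    have : F.submatrix f id = diagonal (fun j => (Real.sqrt (lam (f j)) : ℂ)) * G.submatrix f id := by
      ext i j
      simp only [hF, submatrix_apply, id_eq, Matrix.mul_apply, hR, diagonal_apply]
      rw [Finset.sum_eq_single i]
      · simp
      · intro b _ hb
        simp [Ne.symm hb]
      · simp
    rw [this, det_mul, det_diagonal]
  have habs : ∀ f : Fin k → Fin n,
      ‖det (F.submatrix f id)‖ ^ 2 =
        (∏ j : Fin k, lam (f j)) * ‖det (G.submatrix f id)‖ ^ 2 := by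
    intro f
    rw [hsub f, norm_mul, mul_pow]
    congr 1
    have h1 : ‖∏ j : Fin k, (Real.sqrt (lam (f j)) : ℂ)‖ =
        ∏ j : Fin k, Real.sqrt (lam (f j)) := by
      rw [norm_prod]
      refine Finset.prod_congr rfl fun j _ => ?_
      rw [Complex.norm_real, Real.norm_eq_abs, abs_of_nonneg (Real.sqrt_nonneg _)]
    rw [h1, ← Finset.prod_pow]
    refine Finset.prod_congr rfl fun j _ => ?_
    rw [Real.sq_sqrt (hH.eigenvalues_nonneg _)]
  rw [Finset.sum_congr rfl fun f _ => habs f]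
  have hGsum : ∑ f ∈ univ.filter (fun f : Fin k → Fin n => StrictMono f),
      ‖det (G.submatrix f id)‖ ^ 2 = 1 := by
    rw [← det_gram_re, hGG, det_one, Complex.one_re]
  set B := ∏ j : Fin k, lam (Tuple.sort lam (Fin.castLE hk j).rev) with hB
  have hBnn : 0 ≤ B := Finset.prod_nonneg fun j _ => hH.eigenvalues_nonneg _
  calc ∑ f ∈ univ.filter (fun f : Fin k → Fin n => StrictMono f),
        (∏ j : Fin k, lam (f j)) * ‖det (G.submatrix f id)‖ ^ 2
      ≤ ∑ f ∈ univ.filter (fun f : Fin k → Fin n => StrictMono f),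
        B * ‖det (G.submatrix f id)‖ ^ 2 := by
        refine Finset.sum_le_sum fun f hf => ?_
        refine mul_le_mul_of_nonneg_right ?_ (sq_nonneg _)
        exact prod_sel_le hk lam (fun i => hH.eigenvalues_nonneg i) f
          ((Finset.mem_filter.mp hf).2.injective)
    _ = B := by rw [← Finset.mul_sum, hGsum, mul_one]

lemma prod_filter_castLE {n k : ℕ} (hk : k ≤ n) (F : Fin n → ℝ) :
    ∏ i ∈ univ.filter (fun i : Fin n => (i : ℕ) < k), F i
      = ∏ j : Fin k, F (Fin.castLE hk j) := by
  refine (Finset.prod_bij (fun (j : Fin k) _ => Fin.castLE hk j) ?_ ?_ ?_ ?_).symm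
  · intro j _
    simp only [Finset.mem_filter, Finset.mem_univ, true_and]
    exact j.2
  · intro a _ b _ hab
    exact Fin.castLE_injective hk hab
  · intro b hb
    simp only [Finset.mem_filter, Finset.mem_univ, true_and] at hb
    exact ⟨⟨(b : ℕ), hb⟩, Finset.mem_univ _, rfl⟩
  · intro j _
    rfl

theorem horn_main {n : ℕ} (X K : Matrix (Fin n) (Fin n) ℂ)
    (hK : ((1 : Matrix (Fin n) (Fin n) ℂ) - Kᴴ * K).PosSemidef)
    {A H : Matrix (Fin n) (Fin n) ℂ} (hApsd : A.PosSemidef) (hHpsd : H.PosSemidef)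
    (hH : H = X * Xᴴ) (hA2 : A * A = (X * K * Xᴴ)ᴴ * (X * K * Xᴴ)) :
    ∀ k, (hk : k ≤ n) →
      ∏ j : Fin k, hApsd.1.eigenvalues
          (Tuple.sort hApsd.1.eigenvalues (Fin.castLE hk j).rev) ≤
        ∏ j : Fin k, hHpsd.1.eigenvalues
          (Tuple.sort hHpsd.1.eigenvalues (Fin.castLE hk j).rev) := by
  intro k hk
  classical
  set M : Matrix (Fin n) (Fin n) ℂ := X * K * Xᴴ with hM
  set dA : Fin n → ℝ := hApsd.1.eigenvalues with hdA
  set c : Fin k → Fin n := fun j => Tuple.sort dA (Fin.castLE hk j).rev with hc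
  have hcinj : Function.Injective c := by
    intro a b hab
    have h1 := (Tuple.sort dA).injective hab
    have h2 := Fin.rev_injective h1
    exact Fin.castLE_injective hk h2
  set R : ℝ := ∏ j : Fin k, hHpsd.1.eigenvalues
      (Tuple.sort hHpsd.1.eigenvalues (Fin.castLE hk j).rev) with hRdef
  have hRnn : 0 ≤ R := Finset.prod_nonneg fun j _ => hHpsd.eigenvalues_nonneg _
  by_cases hz : ∃ j : Fin k, dA (c j) = 0
  · obtain ⟨j0, hj0⟩ := hz
    calc ∏ j : Fin k, dA (c j) = 0 := Finset.prod_eq_zero (Finset.mem_univ j0) hj0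
      _ ≤ R := hRnn
  · push_neg at hz
    have hdpos : ∀ j : Fin k, (0:ℝ) < dA (c j) := fun j =>
      lt_of_le_of_ne (hApsd.eigenvalues_nonneg _) (Ne.symm (hz j))
    set E : Matrix (Fin n) (Fin n) ℂ := (hApsd.1.eigenvectorUnitary : Matrix (Fin n) (Fin n) ℂ)
      with hE
    have hEsm : Eᴴ * E = 1 := by
      rw [← star_eq_conjTranspose]
      exact Matrix.mem_unitaryGroup_iff'.mp hApsd.1.eigenvectorUnitary.2
    set DA : Matrix (Fin n) (Fin n) ℂ := diagonal (fun i => (dA i : ℂ)) with hDA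
    have hspecA : A = E * DA * Eᴴ := by
      rw [← star_eq_conjTranspose]
      exact hApsd.1.spectral_theorem
    have hAE : A * E = E * DA := by
      conv_lhs => rw [hspecA]
      rw [Matrix.mul_assoc, hEsm, Matrix.mul_one]
    set W : Matrix (Fin n) (Fin k) ℂ := E.submatrix id c with hW
    have hWW : Wᴴ * W = 1 := by
      ext j j'
      have h1 : (Wᴴ * W) j j' = (Eᴴ * E) (c j) (c j') := by
        simp [Matrix.mul_apply, conjTranspose_apply, hW]
      rw [h1, hEsm]
      simp [Matrix.one_apply, hcinj.eq_iff]
    set Dc : Matrix (Fin k) (Fin k) ℂ := diagonal (fun j => (dA (c j) : ℂ)) with hDc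
    have hAW : A * W = W * Dc := by
      ext i j
      have h1 : (A * W) i j = (A * E) i (c j) := by
        simp [Matrix.mul_apply, hW]
      rw [h1, hAE, Matrix.mul_diagonal, hDc, Matrix.mul_diagonal]
      rfl
    have hWNW : Wᴴ * ((X * K * Xᴴ)ᴴ * (X * K * Xᴴ)) * W = Dc * Dc := by
      have h0 : Wᴴ * ((X * K * Xᴴ)ᴴ * (X * K * Xᴴ)) * W = Wᴴ * (A * (A * W)) := by
        rw [← hA2]
        simp only [Matrix.mul_assoc]
      rw [h0, hAW, ← Matrix.mul_assoc A W Dc, hAW]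
      simp only [← Matrix.mul_assoc]
      rw [hWW, Matrix.one_mul]
    set Dinv : Matrix (Fin k) (Fin k) ℂ := diagonal (fun j => ((dA (c j) : ℂ))⁻¹) with hDinv
    have hDinvH : Dinvᴴ = Dinv := by
      rw [hDinv, diagonal_conjTranspose]
      refine congrArg diagonal (funext fun j => ?_)
      simp [Complex.star_def, map_inv₀, Complex.conj_ofReal]
    have hdne : ∀ j : Fin k, ((dA (c j) : ℂ)) ≠ 0 := fun j =>
      Complex.ofReal_ne_zero.mpr (hz j)
    set V : Matrix (Fin n) (Fin k) ℂ := (X * K * Xᴴ) * W * Dinv with hV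
    have hVMW : Vᴴ * ((X * K * Xᴴ) * W) = Dc := by
      rw [hV, conjTranspose_mul, conjTranspose_mul, hDinvH, Matrix.mul_assoc,
        Matrix.mul_assoc]
      have h1 : Wᴴ * ((X * K * Xᴴ)ᴴ * ((X * K * Xᴴ) * W)) = Dc * Dc := by
        rw [← hWNW]
        simp only [Matrix.mul_assoc]
      rw [h1, hDinv, hDc, ← Matrix.mul_assoc, diagonal_mul_diagonal, diagonal_mul_diagonal]
      refine congrArg diagonal (funext fun j => ?_)
      field_simp
    have hVV : Vᴴ * V = 1 := by
      rw [hV]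
      have h2 : Vᴴ * ((X * K * Xᴴ) * W * Dinv) = Dc * Dinv := by
        rw [← Matrix.mul_assoc, hVMW]
      rw [← hV, h2, hDc, hDinv, diagonal_mul_diagonal]
      have : (fun j => (dA (c j) : ℂ) * ((dA (c j) : ℂ))⁻¹) = fun _ => 1 := by
        funext j
        exact mul_inv_cancel₀ (hdne j)
      rw [this, diagonal_one]
    -- now the Cauchy-Schwarz step
    set A₁ : Matrix (Fin n) (Fin k) ℂ := Xᴴ * V with hA₁
    set B₁ : Matrix (Fin n) (Fin k) ℂ := K * Xᴴ * W with hB₁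
    have hAB : A₁ᴴ * B₁ = Vᴴ * ((X * K * Xᴴ) * W) := by
      rw [hA₁, hB₁, conjTranspose_mul, conjTranspose_conjTranspose]
      simp only [Matrix.mul_assoc]
    have hcs := det_CS A₁ B₁
    rw [hAB, hVMW] at hcs
    have hdet : ‖det Dc‖ = ∏ j : Fin k, dA (c j) := by
      rw [hDc, det_diagonal, norm_prod]
      refine Finset.prod_congr rfl fun j _ => ?_
      rw [Complex.norm_real, Real.norm_eq_abs, abs_of_pos (hdpos j)]
    -- bound 1 : A₁ᴴ * A₁
    have hb1 : (det (A₁ᴴ * A₁)).re ≤ R := by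
      have h1 : A₁ᴴ * A₁ = Vᴴ * H * V := by
        rw [hA₁, conjTranspose_mul, conjTranspose_conjTranspose, hH]
        simp only [Matrix.mul_assoc]
      rw [h1]
      exact kyFan hk hHpsd V hVV
    -- bound 2 : B₁ᴴ * B₁
    have hb2 : (det (B₁ᴴ * B₁)).re ≤ R := by
      have hPpsd : (B₁ᴴ * B₁).PosSemidef := posSemidef_conjTranspose_mul_self B₁
      have hQpsd' : (Wᴴ * H * W).PosSemidef := hHpsd.conjTranspose_mul_mul_same W
      have hdiff : Wᴴ * H * W - B₁ᴴ * B₁ =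
          (Xᴴ * W)ᴴ * ((1 : Matrix (Fin n) (Fin n) ℂ) - Kᴴ * K) * (Xᴴ * W) := by
        rw [hB₁, hH]
        simp only [conjTranspose_mul, conjTranspose_conjTranspose, Matrix.mul_sub,
          Matrix.sub_mul, Matrix.mul_one, Matrix.one_mul]
        simp only [Matrix.mul_assoc]
      have hdiffpsd : (Wᴴ * H * W - B₁ᴴ * B₁).PosSemidef := by
        rw [hdiff]
        exact hK.conjTranspose_mul_mul_same (Xᴴ * W)
      have h3 : (det (B₁ᴴ * B₁)).re ≤ (det (Wᴴ * H * W)).re :=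
        det_mono hPpsd hQpsd' hdiffpsd
      exact h3.trans (kyFan hk hHpsd W hWW)
    have hb1nn : 0 ≤ (det (A₁ᴴ * A₁)).re := (det_re_eq (posSemidef_conjTranspose_mul_self A₁)).2
    have hb2nn : 0 ≤ (det (B₁ᴴ * B₁)).re := (det_re_eq (posSemidef_conjTranspose_mul_self B₁)).2
    have hsq : (∏ j : Fin k, dA (c j)) ^ 2 ≤ R ^ 2 := by
      rw [← hdet]
      calc ‖det Dc‖ ^ 2 ≤ (det (A₁ᴴ * A₁)).re * (det (B₁ᴴ * B₁)).re := hcs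
        _ ≤ R * R := mul_le_mul hb1 hb2 hb2nn hRnn
        _ = R ^ 2 := (sq R).symm
    have hLnn : 0 ≤ ∏ j : Fin k, dA (c j) :=
      Finset.prod_nonneg fun j _ => (hdpos j).le
    calc ∏ j : Fin k, dA (c j) = Real.sqrt ((∏ j : Fin k, dA (c j)) ^ 2) :=
          (Real.sqrt_sq hLnn).symm
      _ ≤ Real.sqrt (R ^ 2) := Real.sqrt_le_sqrt hsq
      _ = R := Real.sqrt_sq hRnn

end HornAux

theorem stmt_19 {n : ℕ} (X K : Matrix (Fin n) (Fin n) ℂ)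
    (hK : ((1 : Matrix (Fin n) (Fin n) ℂ) - Kᴴ * K).PosSemidef) :
    ∀ k ≤ n,
      ∏ i ∈ Finset.univ.filter (fun i : Fin n => (i : ℕ) < k),
          eigDesc (matAbs_posSemidef (X * K * Xᴴ)).1 i ≤
        ∏ i ∈ Finset.univ.filter (fun i : Fin n => (i : ℕ) < k),
          eigDesc (Matrix.posSemidef_self_mul_conjTranspose X).1 i := by
  intro k hk
  rw [HornAux.prod_filter_castLE hk, HornAux.prod_filter_castLE hk]
  exact HornAux.horn_main X K hK (matAbs_posSemidef (X * K * Xᴴ))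
    (Matrix.posSemidef_self_mul_conjTranspose X) rfl
    (psdSqrtOld_mul_self (Matrix.posSemidef_conjTranspose_mul_self (X * K * Xᴴ))) k hk
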